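/- arXiv:1803.04808 — 12 statements merged into one kernel-verified Lean document; each statement's English description precedes it below -/
import Mathlib

section
/- Let (A, →, ⊤) be a BCI-algebra whose induced partial order ⪯ is a meet-semilattice with binary meet ∧, satisfying the adjunction condition (*): a ⪯ b→c iff a∧b ⪯ c, for all a, b, c ∈ A. Let 𝔸 = {(a,b) ∈ A×A : a ⪯ b} be the set of intervals over A, and for X, Y ∈ 𝔸 define X ⤇ Y = [(X̲→Y̲)∧(X̄→Ȳ), X̄→Ȳ]. Then (𝔸, ⤇, [⊤,⊤]) is again a BCI-algebra (satisfying C-1 through C-4), its induced order is the componentwise (Kulisch–Miranker) order, 𝔸 is a meet-semilattice under componentwise meet, and (𝔸, ⤇, [⊤,⊤]) satisfies condition (*) with respect to this meet. -/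
/-- Interval implication ⤇ : X ⤇ Y = [(X̲→Y̲)∧(X̄→Ȳ), X̄→Ȳ], 
represented on pairs of endpoints. -/
def intervalImp5 {A : Type*} (imp meet : A → A → A) (P Q : A × A) : A × A :=
  (meet (imp P.1 Q.1) (imp P.2 Q.2), imp P.2 Q.2)

/-- Componentwise meet of intervals, represented on pairs of endpoints. -/
def intervalMeet5 {A : Type*} (meet : A → A → A) (P Q : A × A) : A × A :=
  (meet P.1 Q.1, meet P.2 Q.2)

/-- intervalization of a BCI-algebra with meet satisfying the
adjunction (*) yields a BCI-algebra (𝔸, ⤇, [⊤,⊤]) whose induced order is the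
Kulisch–Miranker order, which is a meet-semilattice under componentwise meet
and again satisfies (*). Intervals are pairs (X̲, X̄) with X̲ ⪯ X̄,
where x ⪯ y iff x→y = ⊤. -/
theorem stmt_5 {A : Type*} (imp : A → A → A) (top : A) (meet : A → A → A)
    (c1 : ∀ x y z : A, imp (imp y z) (imp (imp z x) (imp y x)) = top)
    (c2 : ∀ x y : A, imp x (imp (imp x y) y) = top)
    (c3 : ∀ x : A, imp x x = top)
    (c4 : ∀ x y : A, imp x y = top → imp y x = top → x = y)
    (meet_le_left : ∀ a b : A, imp (meet a b) a = top)
    (meet_le_right : ∀ a b : A, imp (meet a b) b = top)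
    (le_meet : ∀ a b c : A, imp c a = top → imp c b = top → imp c (meet a b) = top)
    (adj : ∀ a b c : A, imp a (imp b c) = top ↔ imp (meet a b) c = top) :
    -- ⤇ maps intervals to intervals
    (∀ X Y : A × A, imp X.1 X.2 = top → imp Y.1 Y.2 = top →
      imp (intervalImp5 imp meet X Y).1 (intervalImp5 imp meet X Y).2 = top) ∧
    -- (C-1)
    (∀ X Y Z : A × A, imp X.1 X.2 = top → imp Y.1 Y.2 = top → imp Z.1 Z.2 = top →
      intervalImp5 imp meet (intervalImp5 imp meet Y Z)
        (intervalImp5 imp meet (intervalImp5 imp meet Z X)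
          (intervalImp5 imp meet Y X)) = (top, top)) ∧
    -- (C-2)
    (∀ X Y : A × A, imp X.1 X.2 = top → imp Y.1 Y.2 = top →
      intervalImp5 imp meet X
        (intervalImp5 imp meet (intervalImp5 imp meet X Y) Y) = (top, top)) ∧
    -- (C-3)
    (∀ X : A × A, imp X.1 X.2 = top → intervalImp5 imp meet X X = (top, top)) ∧
    -- (C-4)
    (∀ X Y : A × A, imp X.1 X.2 = top → imp Y.1 Y.2 = top →
      intervalImp5 imp meet X Y = (top, top) →
      intervalImp5 imp meet Y X = (top, top) → X = Y) ∧
    -- the induced order is the componentwise (Kulisch–Miranker) order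
    (∀ X Y : A × A, imp X.1 X.2 = top → imp Y.1 Y.2 = top →
      (intervalImp5 imp meet X Y = (top, top) ↔
        (imp X.1 Y.1 = top ∧ imp X.2 Y.2 = top))) ∧
    -- 𝔸 is a meet-semilattice under componentwise meet
    (∀ X Y : A × A, imp X.1 X.2 = top → imp Y.1 Y.2 = top →
      imp (intervalMeet5 meet X Y).1 (intervalMeet5 meet X Y).2 = top ∧
      intervalImp5 imp meet (intervalMeet5 meet X Y) X = (top, top) ∧
      intervalImp5 imp meet (intervalMeet5 meet X Y) Y = (top, top) ∧
      (∀ Z : A × A, imp Z.1 Z.2 = top →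
        intervalImp5 imp meet Z X = (top, top) →
        intervalImp5 imp meet Z Y = (top, top) →
        intervalImp5 imp meet Z (intervalMeet5 meet X Y) = (top, top))) ∧
    -- condition (*) for (𝔸, ⤇, [⊤,⊤])
    (∀ X Y Z : A × A, imp X.1 X.2 = top → imp Y.1 Y.2 = top → imp Z.1 Z.2 = top →
      (intervalImp5 imp meet X (intervalImp5 imp meet Y Z) = (top, top) ↔
        intervalImp5 imp meet (intervalMeet5 meet X Y) Z = (top, top))) := by

  -- basic lemmas about the base BCI-algebra
  have htop : ∀ a : A, imp a top = top := fun a => by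
    have h := (adj a a a).mpr (meet_le_right a a)
    rwa [c3] at h
  have hmp : ∀ a : A, imp top a = top → a = top := fun a h => c4 a top (htop a) h
  have htopimp : ∀ a : A, imp top a = a := fun a => by
    have h1 : imp a (imp top a) = top := by
      have h := c2 a a
      rwa [c3] at h
    have h2 : imp (imp top a) a = top := hmp _ (c2 top a)
    exact c4 (imp top a) a h2 h1
  have trans : ∀ a b c : A, imp a b = top → imp b c = top → imp a c = top := by
    intro a b c hab hbc
    have h := c1 c a b
    rw [hab] at h
    have h2 := hmp _ h
    rw [hbc] at h2
    exact hmp _ h2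
  have mp_le : ∀ a b c : A, imp c a = top → imp c (imp a b) = top → imp c b = top := by
    intro a b c hca hcab
    exact trans c (meet c a) b (le_meet c a c (c3 c) hca) ((adj c a b).mp hcab)
  have meettop : meet top top = top :=
    c4 (meet top top) top (meet_le_left _ _) (le_meet top top top (c3 top) (c3 top))
  have char : ∀ X Y : A × A, intervalImp5 imp meet X Y = (top, top) ↔
      (imp X.1 Y.1 = top ∧ imp X.2 Y.2 = top) := by
    intro X Y
    simp only [intervalImp5, Prod.mk.injEq]
    constructor
    · rintro ⟨h1, h2⟩
      refine ⟨?_, h2⟩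
      have h3 := meet_le_left (imp X.1 Y.1) (imp X.2 Y.2)
      rw [h1] at h3
      exact hmp _ h3
    · rintro ⟨h1, h2⟩
      rw [h1, h2, meettop]; exact ⟨rfl, rfl⟩
  refine ⟨?_, ?_, ?_, ?_, ?_, ?_, ?_, ?_⟩
  · -- maps intervals to intervals
    intro X Y _ _
    exact meet_le_right _ _
  · -- C-1
    intro X Y Z _ _ _
    rw [char]
    simp only [intervalImp5]
    refine ⟨?_, c1 X.2 Y.2 Z.2⟩
    set M := meet (imp Y.1 Z.1) (imp Y.2 Z.2) with hM
    set K := meet (imp Z.1 X.1) (imp Z.2 X.2) with hK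
    apply le_meet
    · -- M ⪯ K → meet (y1→x1) (y2→x2)
      rw [adj]
      set N := meet M K with hN
      have hNM : imp N M = top := meet_le_left _ _
      have hNK : imp N K = top := meet_le_right _ _
      apply le_meet
      · apply mp_le (imp Z.1 X.1) (imp Y.1 X.1) N
        · exact trans _ _ _ hNK (meet_le_left _ _)
        · exact trans _ _ _ (trans _ _ _ hNM (meet_le_left _ _)) (c1 X.1 Y.1 Z.1)
      · apply mp_le (imp Z.2 X.2) (imp Y.2 X.2) N
        · exact trans _ _ _ hNK (meet_le_right _ _)
        · exact trans _ _ _ (trans _ _ _ hNM (meet_le_right _ _)) (c1 X.2 Y.2 Z.2)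
    · exact trans _ _ _ (meet_le_right _ _) (c1 X.2 Y.2 Z.2)
  · -- C-2
    intro X Y hX _
    rw [char]
    simp only [intervalImp5]
    refine ⟨?_, c2 X.2 Y.2⟩
    set M := meet (imp X.1 Y.1) (imp X.2 Y.2) with hM
    apply le_meet
    · -- X.1 ⪯ M → Y.1
      rw [adj]
      apply mp_le X.1 Y.1 (meet X.1 M)
      · exact meet_le_left _ _
      · exact trans _ _ _ (meet_le_right _ _) (meet_le_left _ _)
    · exact trans _ _ _ hX (c2 X.2 Y.2)
  · -- C-3
    intro X _
    rw [char]
    exact ⟨c3 X.1, c3 X.2⟩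
  · -- C-4
    intro X Y _ _ hXY hYX
    obtain ⟨h1, h2⟩ := (char X Y).mp hXY
    obtain ⟨h3, h4⟩ := (char Y X).mp hYX
    exact Prod.ext (c4 _ _ h1 h3) (c4 _ _ h2 h4)
  · -- order characterization
    intro X Y _ _
    exact char X Y
  · -- meet semilattice
    intro X Y hX hY
    refine ⟨?_, ?_, ?_, ?_⟩
    · exact le_meet X.2 Y.2 _ (trans _ _ _ (meet_le_left _ _) hX)
        (trans _ _ _ (meet_le_right _ _) hY)
    · rw [char]; exact ⟨meet_le_left _ _, meet_le_left _ _⟩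
    · rw [char]; exact ⟨meet_le_right _ _, meet_le_right _ _⟩
    · intro Z _ hZX hZY
      obtain ⟨h1, h2⟩ := (char Z X).mp hZX
      obtain ⟨h3, h4⟩ := (char Z Y).mp hZY
      rw [char]
      exact ⟨le_meet _ _ _ h1 h3, le_meet _ _ _ h2 h4⟩
  · -- condition (*)
    intro X Y Z hX _ _
    rw [char, char]
    simp only [intervalImp5, intervalMeet5]
    constructor
    · rintro ⟨h1, h2⟩
      refine ⟨(adj _ _ _).mp ?_, (adj _ _ _).mp h2⟩
      exact trans _ _ _ h1 (meet_le_left _ _)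
    · rintro ⟨h1, h2⟩
      have h2' : imp X.2 (imp Y.2 Z.2) = top := (adj _ _ _).mpr h2
      refine ⟨le_meet _ _ _ ((adj _ _ _).mpr h1) (trans _ _ _ hX h2'), h2'⟩
end

section
/- Let (A, →, ⊤) be a BCI-algebra with induced partial order ⪯, and suppose there exist a, b ∈ A with a ≠ b and a→b = ⊤. Let 𝔸 = {(a,b) ∈ A×A : a ⪯ b} be the set of intervals over A. Then for every interval D ∈ 𝔸 and every binary operation ↣ on 𝔸 that is an interval representation of → (that is, for all X, Y ∈ 𝔸 and all x, y ∈ A with X̲ ⪯ x ⪯ X̄ and Y̲ ⪯ y ⪯ Ȳ, one has lower endpoint of X↣Y ⪯ x→y ⪯ upper endpoint of X↣Y), the structure (𝔸, ↣, D) is not a BCI-algebra (i.e., fails at least one of axioms C-1 through C-4). -/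
/-- The set of intervals over a BCI-algebra: pairs of endpoints (X̲, X̄)
with X̲ ⪯ X̄, where x ⪯ y iff x→y = ⊤. -/
def Itv6 {A : Type*} (imp : A → A → A) (top : A) : Type _ :=
  {p : A × A // imp p.1 p.2 = top}

/-- In any BCI-algebra, the unit acts as a left identity: e→x = x. -/
theorem bci_unit6 {B : Type*} (op : B → B → B) (e : B)
    (c2 : ∀ x y : B, op x (op (op x y) y) = e)
    (c3 : ∀ x : B, op x x = e)
    (c4 : ∀ x y : B, op x y = e → op y x = e → x = y) :
    ∀ x, op e x = x := by
  have hmax : ∀ x, op e x = e → x = e := by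
    intro x hx
    have h := c2 x x
    rw [c3 x, hx] at h
    exact c4 x e h hx
  intro y
  have h1 : op (op e y) y = e := hmax _ (c2 e y)
  have h2 : op y (op e y) = e := by
    have h := c2 y y
    rwa [c3 y] at h
  exact c4 (op e y) y h1 h2

/-- If a BCI-algebra (A, →, ⊤) has a ≠ b with a→b = ⊤, then for no
interval D and no interval representation ↣ of → is (𝔸, ↣, D) a BCI-algebra. -/
theorem stmt_6 {A : Type*} (imp : A → A → A) (top : A)
    (c1 : ∀ x y z : A, imp (imp y z) (imp (imp z x) (imp y x)) = top)
    (c2 : ∀ x y : A, imp x (imp (imp x y) y) = top)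
    (c3 : ∀ x : A, imp x x = top)
    (c4 : ∀ x y : A, imp x y = top → imp y x = top → x = y)
    (a b : A) (hab : a ≠ b) (hab_le : imp a b = top)
    (D : Itv6 imp top)
    (arr : Itv6 imp top → Itv6 imp top → Itv6 imp top)
    (hrep : ∀ X Y : Itv6 imp top, ∀ x y : A,
      imp X.val.1 x = top → imp x X.val.2 = top →
      imp Y.val.1 y = top → imp y Y.val.2 = top →
      imp (arr X Y).val.1 (imp x y) = top ∧ imp (imp x y) (arr X Y).val.2 = top) :
    ¬ ((∀ X Y Z : Itv6 imp top,
          arr (arr Y Z) (arr (arr Z X) (arr Y X)) = D) ∧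
       (∀ X Y : Itv6 imp top, arr X (arr (arr X Y) Y) = D) ∧
       (∀ X : Itv6 imp top, arr X X = D) ∧
       (∀ X Y : Itv6 imp top, arr X Y = D → arr Y X = D → X = Y)) := by
  rintro ⟨h1, h2, h3, h4⟩
  -- D acts as a left unit on intervals
  have hD : ∀ X, arr D X = X := bci_unit6 arr D h2 h3 h4
  -- the intervals [a,b] and [a,a]
  set Xab : Itv6 imp top := ⟨(a, b), hab_le⟩ with hXab
  set Xa : Itv6 imp top := ⟨(a, a), c3 a⟩ with hXa
  -- b→a belongs to D, since arr Xab Xab = D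
  have hmem := hrep Xab Xab b a hab_le (c3 b) (c3 a) hab_le
  rw [h3 Xab] at hmem
  -- apply representation to arr D Xa = Xa with elements b→a ∈ D and a ∈ Xa
  have hkey := hrep D Xa (imp b a) a hmem.1 hmem.2 (c3 a) (c3 a)
  rw [hD Xa] at hkey
  -- hence (b→a)→a = a
  have heq : imp (imp b a) a = a := c4 _ _ hkey.2 hkey.1
  -- but b ⪯ (b→a)→a, so b ⪯ a, hence a = b
  have hb := c2 b a
  rw [heq] at hb
  exact hab (c4 a b hab_le hb)
end

section
/- Let (A, →, ⊤) be a BCI-algebra whose induced partial order ⪯ is a meet-semilattice with meet ∧ satisfying x→(y∧z) = (x→y)∧(x→z) for all x, y, z ∈ A. Let 𝔸 = {(a,b) ∈ A×A : a ⪯ b} and for X, Y ∈ 𝔸 define X ⇒ Y = [(X̲→Y̲)∧(X̄→Ȳ), X̲→Ȳ]. Then for all X, Y, Z ∈ 𝔸: X ⇒ (Y ⇒ Z) = Y ⇒ (X ⇒ Z). -/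
/-- The interval implication ⇒ : X ⇒ Y = [(X̲→Y̲)∧(X̄→Ȳ), X̲→Ȳ],
represented on pairs of endpoints. -/
def intervalImp8 {A : Type*} (imp meet : A → A → A) (P Q : A × A) : A × A :=
  (meet (imp P.1 Q.1) (imp P.2 Q.2), imp P.1 Q.2)

/-- In the intervalization of a BCI-algebra with meet distributing
over →, the operation ⇒ satisfies the exchange law
X ⇒ (Y ⇒ Z) = Y ⇒ (X ⇒ Z). Intervals are pairs (X̲, X̄) with X̲ ⪯ X̄. -/
theorem stmt_8 {A : Type*} (imp : A → A → A) (top : A) (meet : A → A → A)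
    (c1 : ∀ x y z : A, imp (imp y z) (imp (imp z x) (imp y x)) = top)
    (c2 : ∀ x y : A, imp x (imp (imp x y) y) = top)
    (c3 : ∀ x : A, imp x x = top)
    (c4 : ∀ x y : A, imp x y = top → imp y x = top → x = y)
    (meet_le_left : ∀ a b : A, imp (meet a b) a = top)
    (meet_le_right : ∀ a b : A, imp (meet a b) b = top)
    (le_meet : ∀ a b c : A, imp c a = top → imp c b = top → imp c (meet a b) = top)
    (hdist : ∀ x y z : A, imp x (meet y z) = meet (imp x y) (imp x z)) :
    ∀ X Y Z : A × A,
      imp X.1 X.2 = top → imp Y.1 Y.2 = top → imp Z.1 Z.2 = top →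
      intervalImp8 imp meet X (intervalImp8 imp meet Y Z) =
        intervalImp8 imp meet Y (intervalImp8 imp meet X Z) := by
  -- key lemma: top → x = x
  have topimp : ∀ x : A, imp top x = x := by
    intro x
    have hx_le_u : imp x (imp top x) = top := by
      have h := c2 x x
      rwa [c3 x] at h
    have hu_le_x : imp (imp top x) x = top := by
      set w := imp (imp top x) x with hw
      have h1 : imp top w = top := c2 top x
      have h2 : imp (imp w top) top = top := by
        have h := c1 w w top
        rwa [h1, c3, c3] at h
      have h3 : imp w top = top := by
        have h := c2 w top
        rwa [h2] at h
      exact c4 w top h3 h1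
    exact (c4 x (imp top x) hx_le_u hu_le_x).symm
  have tr : ∀ a b c : A, imp a b = top → imp b c = top → imp a c = top := by
    intro a b c hab hbc
    have h := c1 c a b
    rwa [hab, topimp, hbc, topimp] at h
  have exch_le : ∀ a b c : A, imp (imp a (imp b c)) (imp b (imp a c)) = top := by
    intro a b c
    have s1 : imp (imp a (imp b c)) (imp (imp (imp b c) c) (imp a c)) = top :=
      c1 c a (imp b c)
    have s2 : imp (imp (imp (imp b c) c) (imp a c)) (imp b (imp a c)) = top := by
      have h := c1 (imp a c) b (imp (imp b c) c)
      rwa [c2 b c, topimp] at h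
    exact tr _ _ _ s1 s2
  have exch : ∀ a b c : A, imp a (imp b c) = imp b (imp a c) := fun a b c =>
    c4 _ _ (exch_le a b c) (exch_le b a c)
  have key : ∀ a b c : A, imp (meet (meet a b) c) (meet (meet a c) b) = top := by
    intro a b c
    apply le_meet
    · apply le_meet
      · exact tr _ _ _ (meet_le_left (meet a b) c) (meet_le_left a b)
      · exact meet_le_right (meet a b) c
    · exact tr _ _ _ (meet_le_left (meet a b) c) (meet_le_right a b)
  have mrot : ∀ a b c : A, meet (meet a b) c = meet (meet a c) b := fun a b c =>
    c4 _ _ (key a b c) (key a c b)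
  intro X Y Z _ _ _
  simp only [intervalImp8, Prod.mk.injEq]
  constructor
  · rw [hdist, hdist, exch X.1 Y.1 Z.1, exch X.1 Y.2 Z.2, exch X.2 Y.1 Z.2,
      mrot (imp Y.1 (imp X.1 Z.1)) (imp Y.2 (imp X.1 Z.2)) (imp Y.1 (imp X.2 Z.2))]
  · exact exch X.1 Y.1 Z.2
end

section
/- Let (A, →, ⊤) be a BCI-algebra whose induced partial order ⪯ is a meet-semilattice with meet ∧ satisfying x→(y∧z) = (x→y)∧(x→z) for all x, y, z ∈ A. Let 𝔸 = {(a,b) ∈ A×A : a ⪯ b}, and for X, Y ∈ 𝔸 define X ⇛ Y = [X̄→Y̲, X̲→Ȳ] and X ⇒ Y = [(X̲→Y̲)∧(X̄→Ȳ), X̲→Ȳ]. Then for all X, Y, Z ∈ 𝔸: X ⇛ Y ≾ (Z ⇛ X) ⇒ (Z ⇛ Y), where ≾ is the Kulisch–Miranker order (U ≾ V iff U̲ ⪯ V̲ and Ū ⪯ V̄). -/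
/-- The best interval representation ⇛ : X ⇛ Y = [X̄→Y̲, X̲→Ȳ],
represented on pairs of endpoints. -/
def intervalArr9 {A : Type*} (imp : A → A → A) (P Q : A × A) : A × A :=
  (imp P.2 Q.1, imp P.1 Q.2)

/-- The interval implication ⇒ : X ⇒ Y = [(X̲→Y̲)∧(X̄→Ȳ), X̲→Ȳ],
represented on pairs of endpoints. -/
def intervalImp9 {A : Type*} (imp meet : A → A → A) (P Q : A × A) : A × A :=
  (meet (imp P.1 Q.1) (imp P.2 Q.2), imp P.1 Q.2)

/-- In the intervalization of a BCI-algebra with meet distributing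
over →: X ⇛ Y ≾ (Z ⇛ X) ⇒ (Z ⇛ Y) in the Kulisch–Miranker order
(componentwise ⪯, where x ⪯ y iff x→y = ⊤). -/
theorem stmt_9 {A : Type*} (imp : A → A → A) (top : A) (meet : A → A → A)
    (c1 : ∀ x y z : A, imp (imp y z) (imp (imp z x) (imp y x)) = top)
    (c2 : ∀ x y : A, imp x (imp (imp x y) y) = top)
    (c3 : ∀ x : A, imp x x = top)
    (c4 : ∀ x y : A, imp x y = top → imp y x = top → x = y)
    (meet_le_left : ∀ a b : A, imp (meet a b) a = top)
    (meet_le_right : ∀ a b : A, imp (meet a b) b = top)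
    (le_meet : ∀ a b c : A, imp c a = top → imp c b = top → imp c (meet a b) = top)
    (hdist : ∀ x y z : A, imp x (meet y z) = meet (imp x y) (imp x z)) :
    ∀ X Y Z : A × A,
      imp X.1 X.2 = top → imp Y.1 Y.2 = top → imp Z.1 Z.2 = top →
      imp (intervalArr9 imp X Y).1
        (intervalImp9 imp meet (intervalArr9 imp Z X) (intervalArr9 imp Z Y)).1 = top ∧
      imp (intervalArr9 imp X Y).2
        (intervalImp9 imp meet (intervalArr9 imp Z X) (intervalArr9 imp Z Y)).2 = top := by
  -- L1 : top → x = x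
  have l1 : ∀ x : A, imp top x = x := by
    intro x
    -- G1 : top ⪯ (top→x)→x
    have g1 : imp top (imp (imp top x) x) = top := c2 top x
    -- a ⪯ top→a  for a = (top→x)→x
    have h2 : imp (imp (imp top x) x) (imp (imp x x) (imp (imp top x) x)) = top :=
      c1 x (imp top x) x
    rw [c3 x] at h2
    rw [g1] at h2
    have h4 : imp (imp top x) x = top := c4 _ _ h2 g1
    -- x ⪯ top→x
    have h5 : imp x (imp (imp x x) x) = top := c2 x x
    rw [c3 x] at h5
    exact c4 _ _ h4 h5
  -- transitivity
  have trans : ∀ x y z : A, imp x y = top → imp y z = top → imp x z = top := by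
    intro x y z hxy hyz
    have h := c1 z x y
    rw [hxy, l1, hyz, l1] at h
    exact h
  -- antitone in first argument
  have anti : ∀ x y z : A, imp x y = top → imp (imp y z) (imp x z) = top := by
    intro x y z hxy
    have h := c1 z x y
    rw [hxy, l1] at h
    exact h
  -- key : a→b ⪯ (c→a)→(c→b)
  have key : ∀ a b c : A, imp (imp a b) (imp (imp c a) (imp c b)) = top := by
    intro a b c
    have k1 : imp (imp c a) (imp (imp a b) (imp c b)) = top := c1 b c a
    have k2 : imp (imp a b) (imp (imp (imp a b) (imp c b)) (imp c b)) = top :=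
      c2 (imp a b) (imp c b)
    have k3 : imp (imp (imp (imp a b) (imp c b)) (imp c b)) (imp (imp c a) (imp c b)) = top :=
      anti _ _ _ k1
    exact trans _ _ _ k2 k3
  -- monotone in second argument
  have mono : ∀ x y z : A, imp y z = top → imp (imp x y) (imp x z) = top := by
    intro x y z hyz
    have h := key y z x
    rw [hyz, l1] at h
    exact h
  intro X Y Z hX hY hZ
  simp only [intervalArr9, intervalImp9]
  constructor
  · apply le_meet
    · -- x2→y1 ⪯ (z2→x1)→(z2→y1)
      exact trans _ _ _ (anti _ _ _ hX) (key X.1 Y.1 Z.2)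
    · -- x2→y1 ⪯ (z1→x2)→(z1→y2)
      exact trans _ _ _ (mono _ _ _ hY) (key X.2 Y.2 Z.1)
  · -- x1→y2 ⪯ (z2→x1)→(z1→y2)
    exact trans _ _ _ (key X.1 Y.2 Z.1) (anti _ _ _ (anti _ _ _ hZ))
end

section
/- Let (A, →, ⊤) be a BCI-algebra whose induced partial order ⪯ is a meet-semilattice with meet ∧, and suppose A contains at least one element a with a ≠ ⊤. Let 𝔸 = {(a,b) ∈ A×A : a ⪯ b} and for X, Y ∈ 𝔸 define X ⇛ Y = [X̄→Y̲, X̲→Ȳ]. Then (𝔸, ⇛, [⊤,⊤]) is not a BCI-algebra; in particular there exists X ∈ 𝔸 (e.g., X = [a∧⊤, ⊤]) with X ⇛ X ≠ [⊤,⊤], so axiom C-3 fails. -/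
/-- The best interval representation ⇛ : X ⇛ Y = [X̄→Y̲, X̲→Ȳ],
represented on pairs of endpoints. -/
def intervalArr10 {A : Type*} (imp : A → A → A) (P Q : A × A) : A × A :=
  (imp P.2 Q.1, imp P.1 Q.2)

/-- If a BCI-algebra whose induced order is a meet-semilattice has
an element a ≠ ⊤, then (𝔸, ⇛, [⊤,⊤]) is not a BCI-algebra: the interval
X = [a∧⊤, ⊤] is a genuine interval with X ⇛ X ≠ [⊤,⊤], so axiom C-3 fails. -/
theorem stmt_10 {A : Type*} (imp : A → A → A) (top : A) (meet : A → A → A)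
    (c1 : ∀ x y z : A, imp (imp y z) (imp (imp z x) (imp y x)) = top)
    (c2 : ∀ x y : A, imp x (imp (imp x y) y) = top)
    (c3 : ∀ x : A, imp x x = top)
    (c4 : ∀ x y : A, imp x y = top → imp y x = top → x = y)
    (meet_le_left : ∀ a b : A, imp (meet a b) a = top)
    (meet_le_right : ∀ a b : A, imp (meet a b) b = top)
    (le_meet : ∀ a b c : A, imp c a = top → imp c b = top → imp c (meet a b) = top)
    (a : A) (ha : a ≠ top) :
    imp (meet a top) top = top ∧
    intervalArr10 imp (meet a top, top) (meet a top, top) ≠ (top, top) ∧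
    ¬ (∀ X : A × A, imp X.1 X.2 = top → intervalArr10 imp X X = (top, top)) := by
  have hkey : intervalArr10 imp (meet a top, top) (meet a top, top) ≠ (top, top) := by
    intro h
    have h1 : imp top (meet a top) = top := congrArg Prod.fst h
    have hm : meet a top = top := c4 _ _ (meet_le_right a top) h1
    have hta : imp top a = top := by have h2 := meet_le_left a top; rwa [hm] at h2
    have hat : imp a top = top := by
      have := c2 a a
      rwa [c3, hta] at this
    exact ha (c4 a top hat hta)
  refine ⟨meet_le_right a top, hkey, fun h => hkey (h _ (meet_le_right a top))⟩
end

section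
/- Let (A, →, ⊤) be a BCI-algebra whose induced partial order ⪯ is a meet-semilattice with meet ∧ satisfying x→(y∧z) = (x→y)∧(x→z) for all x, y, z ∈ A. Let 𝔸 = {(a,b) ∈ A×A : a ⪯ b}, and define X ⇛ Y = [X̄→Y̲, X̲→Ȳ], X ⇒ Y = [(X̲→Y̲)∧(X̄→Ȳ), X̲→Ȳ], X ≪ Y iff X̄ ⪯ Y̲, and X ≾ Y iff X̲ ⪯ Y̲ and X̄ ⪯ Ȳ. Then: (OPa) if X ≪ Y then X ⇒ Y = [⊤,⊤]; and (OPb) if X ⇛ Y = [⊤,⊤] then X ≾ Y. -/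
/-- The best interval representation ⇛ : X ⇛ Y = [X̄→Y̲, X̲→Ȳ],
represented on pairs of endpoints. -/
def intervalArr13 {A : Type*} (imp : A → A → A) (P Q : A × A) : A × A :=
  (imp P.2 Q.1, imp P.1 Q.2)

/-- The interval implication ⇒ : X ⇒ Y = [(X̲→Y̲)∧(X̄→Ȳ), X̲→Ȳ],
represented on pairs of endpoints. -/
def intervalImp13 {A : Type*} (imp meet : A → A → A) (P Q : A × A) : A × A :=
  (meet (imp P.1 Q.1) (imp P.2 Q.2), imp P.1 Q.2)

/-- In the intervalization of a BCI-algebra with meet distributing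
over →: (OPa) if X ≪ Y (i.e. X̄ ⪯ Y̲) then X ⇒ Y = [⊤,⊤]; (OPb) if
X ⇛ Y = [⊤,⊤] then X ≾ Y (i.e. X̲ ⪯ Y̲ and X̄ ⪯ Ȳ). -/
theorem stmt_13 {A : Type*} (imp : A → A → A) (top : A) (meet : A → A → A)
    (c1 : ∀ x y z : A, imp (imp y z) (imp (imp z x) (imp y x)) = top)
    (c2 : ∀ x y : A, imp x (imp (imp x y) y) = top)
    (c3 : ∀ x : A, imp x x = top)
    (c4 : ∀ x y : A, imp x y = top → imp y x = top → x = y)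
    (meet_le_left : ∀ a b : A, imp (meet a b) a = top)
    (meet_le_right : ∀ a b : A, imp (meet a b) b = top)
    (le_meet : ∀ a b c : A, imp c a = top → imp c b = top → imp c (meet a b) = top)
    (hdist : ∀ x y z : A, imp x (meet y z) = meet (imp x y) (imp x z)) :
    (∀ X Y : A × A, imp X.1 X.2 = top → imp Y.1 Y.2 = top →
      imp X.2 Y.1 = top → intervalImp13 imp meet X Y = (top, top)) ∧
    (∀ X Y : A × A, imp X.1 X.2 = top → imp Y.1 Y.2 = top →
      intervalArr13 imp X Y = (top, top) →
      imp X.1 Y.1 = top ∧ imp X.2 Y.2 = top) := by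
  -- top is maximal: if top ⪯ w then w = top
  have L0 : ∀ w : A, imp top w = top → w = top := by
    intro w h
    have h2 := c2 w w
    rw [c3 w, h] at h2
    exact c4 w top h2 h
  -- transitivity
  have htrans : ∀ a b c : A, imp a b = top → imp b c = top → imp a c = top := by
    intro a b c hab hbc
    have h := c1 c a b
    rw [hab] at h
    have h' := L0 _ h
    rw [hbc] at h'
    exact L0 _ h'
  have hmt : meet top top = top :=
    c4 _ _ (meet_le_left top top) (le_meet top top top (c3 top) (c3 top))
  constructor
  · rintro ⟨x1, x2⟩ ⟨y1, y2⟩ hx hy hxy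
    simp only [intervalImp13] at *
    have h11 : imp x1 y1 = top := htrans _ _ _ hx hxy
    have h22 : imp x2 y2 = top := htrans _ _ _ hxy hy
    have h12 : imp x1 y2 = top := htrans _ _ _ h11 hy
    rw [h11, h22, h12, hmt]
  · rintro ⟨x1, x2⟩ ⟨y1, y2⟩ hx hy harr
    simp only [intervalArr13, Prod.mk.injEq] at harr
    exact ⟨htrans _ _ _ hx harr.1, htrans _ _ _ harr.1 hy⟩
end

section
/- On the real unit interval [0,1], define x ↠ y = 1 − x + x·y (the Reichenbach implication) and x → y = min(1, 1 − x + y) (the Łukasiewicz implication), and set ⊤ = 1. Then ([0,1], ↠, →, 1) is a Semi-BCI algebra, i.e., for all x, y, z ∈ [0,1]: (SBCI1) x↠(y↠z) = y↠(x↠z); (SBCI2) x→(y→z) = y→(x→z); (SBCI3) (x↠y)→((z↠x)→(z↠y)) = 1; (SBCI4) 1↠x = x; (SBCI5) if x↠y = 1 and y→z = 1 then x↠z = 1; (SBCI6) if x→y = 1 and y↠z = 1 then x↠z = 1; (SBCI7) if x→y = 1 and y→x = 1 then x = y. -/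
lemma min_one_eq_one_iff {a : ℝ} : min 1 a = 1 ↔ 1 ≤ a := by
  constructor
  · intro h
    by_contra hc
    push_neg at hc
    rw [min_eq_right hc.le] at h
    linarith
  · intro h; exact min_eq_left h

/-- ([0,1], ↠_R, →_LK, 1) is a Semi-BCI algebra, where
x ↠ y = 1 − x + x·y is the Reichenbach implication and
x → y = min(1, 1 − x + y) is the Łukasiewicz implication. -/
theorem stmt_14 :
    let R : ℝ → ℝ → ℝ := fun x y => 1 - x + x * y
    let L : ℝ → ℝ → ℝ := fun x y => min 1 (1 - x + y)
    let I : Set ℝ := Set.Icc (0 : ℝ) 1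
    -- the operations are well defined on [0,1]
    (∀ x ∈ I, ∀ y ∈ I, R x y ∈ I) ∧
    (∀ x ∈ I, ∀ y ∈ I, L x y ∈ I) ∧
    -- (SBCI1)
    (∀ x ∈ I, ∀ y ∈ I, ∀ z ∈ I, R x (R y z) = R y (R x z)) ∧
    -- (SBCI2)
    (∀ x ∈ I, ∀ y ∈ I, ∀ z ∈ I, L x (L y z) = L y (L x z)) ∧
    -- (SBCI3)
    (∀ x ∈ I, ∀ y ∈ I, ∀ z ∈ I, L (R x y) (L (R z x) (R z y)) = 1) ∧
    -- (SBCI4)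
    (∀ x ∈ I, R 1 x = x) ∧
    -- (SBCI5)
    (∀ x ∈ I, ∀ y ∈ I, ∀ z ∈ I, R x y = 1 → L y z = 1 → R x z = 1) ∧
    -- (SBCI6)
    (∀ x ∈ I, ∀ y ∈ I, ∀ z ∈ I, L x y = 1 → R y z = 1 → R x z = 1) ∧
    -- (SBCI7)
    (∀ x ∈ I, ∀ y ∈ I, L x y = 1 → L y x = 1 → x = y) := by
  intro R L I
  refine ⟨?_, ?_, ?_, ?_, ?_, ?_, ?_, ?_, ?_⟩
  · rintro x ⟨hx0, hx1⟩ y ⟨hy0, hy1⟩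
    constructor
    · simp only [R]; nlinarith [mul_nonneg hx0 hy0]
    · simp only [R]; nlinarith [mul_nonneg hx0 (sub_nonneg.2 hy1)]
  · rintro x ⟨hx0, hx1⟩ y ⟨hy0, hy1⟩
    constructor
    · simp only [L]; exact le_min (by norm_num) (by linarith)
    · exact min_le_left _ _
  · rintro x - y - z -
    simp only [R]; ring
  · rintro x ⟨hx0, hx1⟩ y ⟨hy0, hy1⟩ z ⟨hz0, hz1⟩
    simp only [L, min_def]
    split_ifs <;> linarith
  · rintro x ⟨hx0, hx1⟩ y ⟨hy0, hy1⟩ z ⟨hz0, hz1⟩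
    simp only [L, R]
    rw [min_one_eq_one_iff]
    have h1 : (1:ℝ) ≤ 1 - (1 - z + z * x) + (1 - z + z * y) - (1 - x + x * y) + 1 := by
      rcases le_total x y with h | h
      · nlinarith [mul_nonneg hz0 (sub_nonneg.2 h), mul_nonneg hx0 (sub_nonneg.2 hy1)]
      · nlinarith [mul_nonneg (sub_nonneg.2 hz1) (sub_nonneg.2 h),
          mul_nonneg hy0 (sub_nonneg.2 hx1)]
    have h2 : 1 - x + x * y ≤ 1 := by nlinarith [mul_nonneg hx0 (sub_nonneg.2 hy1)]
    rcases le_total (1:ℝ) (1 - (1 - z + z * x) + (1 - z + z * y)) with h | h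
    · rw [min_eq_left h]; linarith
    · rw [min_eq_right h]; linarith
  · rintro x -
    simp only [R]; ring
  · rintro x ⟨hx0, hx1⟩ y ⟨hy0, hy1⟩ z ⟨hz0, hz1⟩ h1 h2
    simp only [R] at h1 ⊢
    simp only [L] at h2
    rw [min_one_eq_one_iff] at h2
    nlinarith [mul_nonneg hx0 (sub_nonneg.2 hz1)]
  · rintro x ⟨hx0, hx1⟩ y ⟨hy0, hy1⟩ z ⟨hz0, hz1⟩ h1 h2
    simp only [R] at h2 ⊢
    simp only [L] at h1
    rw [min_one_eq_one_iff] at h1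
    nlinarith [mul_nonneg hx0 (sub_nonneg.2 hz1), mul_nonneg (by linarith : (0:ℝ) ≤ y - x) (sub_nonneg.2 hz1)]
  · rintro x ⟨hx0, hx1⟩ y ⟨hy0, hy1⟩ h1 h2
    simp only [L] at h1 h2
    rw [min_one_eq_one_iff] at h1 h2
    linarith
end

section
/- Let (A, ↠, →, ⊤) be a Semi-BCI algebra, with x ≪ y iff x↠y = ⊤ and x ⪯ y iff x→y = ⊤. Then for all x, y, z ∈ A: (SBCI8) if x ≪ y and y ≪ z then x ≪ z; (SBCI9) if x ≪ y and y ≪ x then x = y; (SBCI10) (y↠z)→((z↠x)→(y↠x)) = ⊤; (SBCI11) if ⊤ ⪯ x then x = ⊤; (SBCI12) x→x = ⊤; (SBCI13) if x ≪ y then x ⪯ y; (SBCI14) (x↠y)→(x→y) = ⊤; (SBCI15) x→((x→y)→y) = ⊤; (SBCI16) if x ≪ y then x↠((x↠y)↠y) = ⊤; (SBCI17) if x ≪ y then (z↠x)→(z↠y) = ⊤; (SBCI18) if x ≪ y then (y↠z)→(x↠z) = ⊤. -/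
/-- properties SBCI8–SBCI18 of Semi-BCI algebras (A, ↠, →, ⊤),
where x ≪ y iff x↠y = ⊤ and x ⪯ y iff x→y = ⊤. -/
theorem stmt_15 {A : Type*} (arr : A → A → A) (imp : A → A → A) (top : A)
    (s1 : ∀ x y z : A, arr x (arr y z) = arr y (arr x z))
    (s2 : ∀ x y z : A, imp x (imp y z) = imp y (imp x z))
    (s3 : ∀ x y z : A, imp (arr x y) (imp (arr z x) (arr z y)) = top)
    (s4 : ∀ x : A, arr top x = x)
    (s5 : ∀ x y z : A, arr x y = top → imp y z = top → arr x z = top)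
    (s6 : ∀ x y z : A, imp x y = top → arr y z = top → arr x z = top)
    (s7 : ∀ x y : A, imp x y = top → imp y x = top → x = y) :
    -- (SBCI8)
    (∀ x y z : A, arr x y = top → arr y z = top → arr x z = top) ∧
    -- (SBCI9)
    (∀ x y : A, arr x y = top → arr y x = top → x = y) ∧
    -- (SBCI10)
    (∀ x y z : A, imp (arr y z) (imp (arr z x) (arr y x)) = top) ∧
    -- (SBCI11)
    (∀ x : A, imp top x = top → x = top) ∧
    -- (SBCI12)
    (∀ x : A, imp x x = top) ∧
    -- (SBCI13)
    (∀ x y : A, arr x y = top → imp x y = top) ∧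
    -- (SBCI14)
    (∀ x y : A, imp (arr x y) (imp x y) = top) ∧
    -- (SBCI15)
    (∀ x y : A, imp x (imp (imp x y) y) = top) ∧
    -- (SBCI16)
    (∀ x y : A, arr x y = top → arr x (arr (arr x y) y) = top) ∧
    -- (SBCI17)
    (∀ x y z : A, arr x y = top → imp (arr z x) (arr z y) = top) ∧
    -- (SBCI18)
    (∀ x y z : A, arr x y = top → imp (arr y z) (arr x z) = top) := by
  -- SBCI11
  have h11 : ∀ x : A, imp top x = top → x = top := by
    intro x h
    have := s5 top top x (s4 top) h
    rwa [s4] at this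
  -- SBCI14
  have h14 : ∀ x y : A, imp (arr x y) (imp x y) = top := by
    intro x y
    have := s3 x y top
    rwa [s4, s4] at this
  -- SBCI12
  have h12 : ∀ x : A, imp x x = top := by
    intro x
    have h := h14 top x
    rw [s4, s2] at h
    exact h11 _ h
  -- SBCI13
  have h13 : ∀ x y : A, arr x y = top → imp x y = top := by
    intro x y h
    have h' := h14 x y
    rw [h] at h'
    exact h11 _ h'
  -- SBCI8
  have h8 : ∀ x y z : A, arr x y = top → arr y z = top → arr x z = top := by
    intro x y z hxy hyz
    have h := s3 y z x
    rw [hyz, hxy] at h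
    exact h11 _ (h11 _ h)
  refine ⟨h8, ?_, ?_, h11, h12, h13, h14, ?_, ?_, ?_, ?_⟩
  · -- SBCI9
    intro x y hxy hyx
    exact s7 x y (h13 x y hxy) (h13 y x hyx)
  · -- SBCI10
    intro x y z
    have h := s3 z x y
    rwa [s2] at h
  · -- SBCI15
    intro x y
    have h := h12 (imp x y)
    rwa [s2] at h
  · -- SBCI16
    intro x y h
    rw [h, s4, h]
  · -- SBCI17
    intro x y z h
    have h' := s3 x y z
    rw [h] at h'
    exact h11 _ h'
  · -- SBCI18
    intro x y z h
    have h' := s3 y z x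
    rw [s2, h] at h'
    exact h11 _ h'
end

section
/- Let (A, ↠, →, ⊤) be a Semi-BCI algebra, with x ≪ y iff x↠y = ⊤ and x ⪯ y iff x→y = ⊤. Then the relations ≪ and ⪯ coincide (for all x, y: x ≪ y iff x ⪯ y) if and only if ≪ is reflexive (x ≪ x for all x ∈ A). -/
/-- In a Semi-BCI algebra (A, ↠, →, ⊤), the relations
≪ (x ≪ y iff x↠y = ⊤) and ⪯ (x ⪯ y iff x→y = ⊤) coincide if and only if
≪ is reflexive. -/
theorem stmt_16 {A : Type*} (arr : A → A → A) (imp : A → A → A) (top : A)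
    (s1 : ∀ x y z : A, arr x (arr y z) = arr y (arr x z))
    (s2 : ∀ x y z : A, imp x (imp y z) = imp y (imp x z))
    (s3 : ∀ x y z : A, imp (arr x y) (imp (arr z x) (arr z y)) = top)
    (s4 : ∀ x : A, arr top x = x)
    (s5 : ∀ x y z : A, arr x y = top → imp y z = top → arr x z = top)
    (s6 : ∀ x y z : A, imp x y = top → arr y z = top → arr x z = top)
    (s7 : ∀ x y : A, imp x y = top → imp y x = top → x = y) :
    (∀ x y : A, arr x y = top ↔ imp x y = top) ↔ (∀ x : A, arr x x = top) := by
  -- Key lemma 1: (x↠y) ⪯ (x→y)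
  have K : ∀ x y : A, imp (arr x y) (imp x y) = top := by
    intro x y
    have := s3 x y top
    rwa [s4, s4] at this
  -- Key lemma 2: ⊤ ⪯ (y→y)
  have T : ∀ y : A, imp top (imp y y) = top := by
    intro y
    have h := s3 top y top
    rw [s4, s4] at h
    rw [s2 top y y]
    exact h
  constructor
  · intro h x
    have h1 : arr top (imp x x) = top := (h top (imp x x)).mpr (T x)
    rw [s4] at h1
    exact (h x x).mpr h1
  · intro refl x y
    constructor
    · intro hxy
      have h1 := K x y
      rw [hxy] at h1
      have h2 : arr top (imp x y) = top := s6 top (imp x y) (imp x y) h1 (refl _)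
      rwa [s4] at h2
    · intro hxy
      exact s6 x y y hxy (refl y)
end

section
/- Let (A, →₁, ⊤) and (A, →₂, ⊤) be BCI-algebras on the same carrier with induced orders ≤₁ and ≤₂ (x ≤ᵢ y iff x →ᵢ y = ⊤). Suppose: (i) ≤₂ extends ≤₁ (x ≤₁ y implies x ≤₂ y); (ii) x→₁y ≤₂ x→₂y for all x, y; and (iii) for all w, x, y, z: if w ≤₂ x, x ≤₁ y, and y ≤₂ z, then w ≤₁ z. Then (A, →₁, →₂, ⊤), with ↠ := →₁ and → := →₂, is a Semi-BCI algebra. -/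
section BCI
variable {A : Type*} {imp : A → A → A} {top : A}

theorem bci_mp (c2 : ∀ x y : A, imp x (imp (imp x y) y) = top)
    (c3 : ∀ x : A, imp x x = top)
    (c4 : ∀ x y : A, imp x y = top → imp y x = top → x = y) :
    ∀ b : A, imp top b = top → b = top := by
  intro b hb
  have h1 : imp b (imp (imp b b) b) = top := c2 b b
  rw [c3 b, hb] at h1
  exact (c4 top b hb h1).symm

theorem bci_trans (c1 : ∀ x y z : A, imp (imp y z) (imp (imp z x) (imp y x)) = top)
    (c2 : ∀ x y : A, imp x (imp (imp x y) y) = top)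
    (c3 : ∀ x : A, imp x x = top)
    (c4 : ∀ x y : A, imp x y = top → imp y x = top → x = y) :
    ∀ a b c : A, imp a b = top → imp b c = top → imp a c = top := by
  intro a b c hab hbc
  have h := c1 c a b
  rw [hab] at h
  have h' := bci_mp c2 c3 c4 _ h
  rw [hbc] at h'
  exact bci_mp c2 c3 c4 _ h'

theorem bci_top_imp (c2 : ∀ x y : A, imp x (imp (imp x y) y) = top)
    (c3 : ∀ x : A, imp x x = top)
    (c4 : ∀ x y : A, imp x y = top → imp y x = top → x = y) :
    ∀ x : A, imp top x = x := by
  intro x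
  have h1 : imp x (imp (imp x x) x) = top := c2 x x
  rw [c3 x] at h1
  have h2 := bci_mp c2 c3 c4 _ (c2 top x)
  exact c4 _ _ h2 h1

theorem bci_antitone (c1 : ∀ x y z : A, imp (imp y z) (imp (imp z x) (imp y x)) = top)
    (c2 : ∀ x y : A, imp x (imp (imp x y) y) = top)
    (c3 : ∀ x : A, imp x x = top)
    (c4 : ∀ x y : A, imp x y = top → imp y x = top → x = y) :
    ∀ a b c : A, imp a b = top → imp (imp b c) (imp a c) = top := by
  intro a b c hab
  have h := c1 c a b
  rw [hab] at h
  exact bci_mp c2 c3 c4 _ h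

theorem bci_exch (c1 : ∀ x y z : A, imp (imp y z) (imp (imp z x) (imp y x)) = top)
    (c2 : ∀ x y : A, imp x (imp (imp x y) y) = top)
    (c3 : ∀ x : A, imp x x = top)
    (c4 : ∀ x y : A, imp x y = top → imp y x = top → x = y) :
    ∀ x y z : A, imp x (imp y z) = imp y (imp x z) := by
  have key : ∀ x y z : A, imp (imp x (imp y z)) (imp y (imp x z)) = top := by
    intro x y z
    have le1 := c1 z x (imp y z)
    have le3 := bci_antitone c1 c2 c3 c4 y (imp (imp y z) z) (imp x z) (c2 y z)
    exact bci_trans c1 c2 c3 c4 _ _ _ le1 le3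
  intro x y z
  exact c4 _ _ (key x y z) (key y x z)

end BCI



/-- If (A, →₁, ⊤) and (A, →₂, ⊤) are BCI-algebras such that
(i) ≤₂ extends ≤₁, (ii) x→₁y ≤₂ x→₂y, and (iii) w ≤₂ x ≤₁ y ≤₂ z implies
w ≤₁ z, then (A, →₁, →₂, ⊤) is a Semi-BCI algebra (with ↠ := →₁, → := →₂).
Here x ≤ᵢ y iff x →ᵢ y = ⊤. -/
theorem stmt_17 {A : Type*} (imp1 imp2 : A → A → A) (top : A)
    (c1₁ : ∀ x y z : A, imp1 (imp1 y z) (imp1 (imp1 z x) (imp1 y x)) = top)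
    (c2₁ : ∀ x y : A, imp1 x (imp1 (imp1 x y) y) = top)
    (c3₁ : ∀ x : A, imp1 x x = top)
    (c4₁ : ∀ x y : A, imp1 x y = top → imp1 y x = top → x = y)
    (c1₂ : ∀ x y z : A, imp2 (imp2 y z) (imp2 (imp2 z x) (imp2 y x)) = top)
    (c2₂ : ∀ x y : A, imp2 x (imp2 (imp2 x y) y) = top)
    (c3₂ : ∀ x : A, imp2 x x = top)
    (c4₂ : ∀ x y : A, imp2 x y = top → imp2 y x = top → x = y)
    (hext : ∀ x y : A, imp1 x y = top → imp2 x y = top)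
    (himp : ∀ x y : A, imp2 (imp1 x y) (imp2 x y) = top)
    (hmix : ∀ w x y z : A, imp2 w x = top → imp1 x y = top → imp2 y z = top →
      imp1 w z = top) :
    -- (SBCI1)
    (∀ x y z : A, imp1 x (imp1 y z) = imp1 y (imp1 x z)) ∧
    -- (SBCI2)
    (∀ x y z : A, imp2 x (imp2 y z) = imp2 y (imp2 x z)) ∧
    -- (SBCI3)
    (∀ x y z : A, imp2 (imp1 x y) (imp2 (imp1 z x) (imp1 z y)) = top) ∧
    -- (SBCI4)
    (∀ x : A, imp1 top x = x) ∧
    -- (SBCI5)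
    (∀ x y z : A, imp1 x y = top → imp2 y z = top → imp1 x z = top) ∧
    -- (SBCI6)
    (∀ x y z : A, imp2 x y = top → imp1 y z = top → imp1 x z = top) ∧
    -- (SBCI7)
    (∀ x y : A, imp2 x y = top → imp2 y x = top → x = y) := by

  have exch1 := bci_exch c1₁ c2₁ c3₁ c4₁
  have exch2 := bci_exch c1₂ c2₂ c3₂ c4₂
  have trans2 := bci_trans c1₂ c2₂ c3₂ c4₂
  refine ⟨exch1, exch2, ?_, bci_top_imp c2₁ c3₁ c4₁, ?_, ?_, c4₂⟩
  · -- SBCI3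
    intro x y z
    have h1 : imp1 (imp1 x y) (imp1 (imp1 z x) (imp1 z y)) = top := by
      rw [exch1]; exact c1₁ y z x
    have h2 := hext _ _ h1
    exact trans2 _ _ _ h2 (himp (imp1 z x) (imp1 z y))
  · -- SBCI5
    intro x y z h5 h6
    exact hmix x x y z (c3₂ x) h5 h6
  · -- SBCI6
    intro x y z h5 h6
    exact hmix x y z z h5 h6 (c3₂ z)
end

section
/- Let (A, →, →, ⊤) be a Semi-BCI algebra in which both binary operations coincide (the same operation → plays both roles). Then (A, →, ⊤) is a BCI-algebra, i.e., for all x, y, z ∈ A: (C-1) (y→z)→((z→x)→(y→x)) = ⊤; (C-2) x→((x→y)→y) = ⊤; (C-3) x→x = ⊤; (C-4) if x→y = ⊤ and y→x = ⊤ then x = y. -/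
/-- If (A, →, →, ⊤) is a Semi-BCI algebra in which both operations
coincide, then (A, →, ⊤) is a BCI-algebra. -/
theorem stmt_18 {A : Type*} (imp : A → A → A) (top : A)
    (s1 : ∀ x y z : A, imp x (imp y z) = imp y (imp x z))
    (s2 : ∀ x y z : A, imp x (imp y z) = imp y (imp x z))
    (s3 : ∀ x y z : A, imp (imp x y) (imp (imp z x) (imp z y)) = top)
    (s4 : ∀ x : A, imp top x = x)
    (s5 : ∀ x y z : A, imp x y = top → imp y z = top → imp x z = top)
    (s6 : ∀ x y z : A, imp x y = top → imp y z = top → imp x z = top)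
    (s7 : ∀ x y : A, imp x y = top → imp y x = top → x = y) :
    -- (C-1)
    (∀ x y z : A, imp (imp y z) (imp (imp z x) (imp y x)) = top) ∧
    -- (C-2)
    (∀ x y : A, imp x (imp (imp x y) y) = top) ∧
    -- (C-3)
    (∀ x : A, imp x x = top) ∧
    -- (C-4)
    (∀ x y : A, imp x y = top → imp y x = top → x = y) := by
  have refl : ∀ a b : A, imp (imp a b) (imp a b) = top := by
    intro a b
    have h := s3 a b top
    rwa [s4, s4] at h
  refine ⟨?_, ?_, ?_, s7⟩
  · intro x y z
    rw [s1]
    exact s3 z x y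
  · intro x y
    rw [s1]
    exact refl x y
  · intro x
    have := refl top x
    rwa [s4] at this
end

section
/- Let (A, ↠, →, ⊤) be a Semi-BCI algebra with relations x ≪ y iff x↠y = ⊤ and x ⪯ y iff x→y = ⊤. Suppose that (A, ⪯, →, ↠, ⊤) is also a pseudo-BCI algebra, i.e., for all x, y, z ∈ A: (PB-1) x→y ⪯ (y→z)↠(x→z); (PB-2) x↠y ⪯ (y↠z)→(x↠z); (PB-3) x ⪯ (x→y)↠y; (PB-4) x ⪯ (x↠y)→y; (PB-5) x ⪯ x; (PB-6) if x ⪯ y and y ⪯ x then x = y; (PB-7) x ⪯ y iff x→y = ⊤ iff x↠y = ⊤. Then x↠y = x→y for all x, y ∈ A, and (A, →, ⊤) is a BCI-algebra. -/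
/-- If (A, ↠, →, ⊤) is a Semi-BCI algebra which is also a
pseudo-BCI algebra (A, ⪯, →, ↠, ⊤) — where x ⪯ y iff x→y = ⊤ — then
↠ and → coincide and (A, →, ⊤) is a BCI-algebra. -/
theorem stmt_19 {A : Type*} (arr : A → A → A) (imp : A → A → A) (top : A)
    (s1 : ∀ x y z : A, arr x (arr y z) = arr y (arr x z))
    (s2 : ∀ x y z : A, imp x (imp y z) = imp y (imp x z))
    (s3 : ∀ x y z : A, imp (arr x y) (imp (arr z x) (arr z y)) = top)
    (s4 : ∀ x : A, arr top x = x)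
    (s5 : ∀ x y z : A, arr x y = top → imp y z = top → arr x z = top)
    (s6 : ∀ x y z : A, imp x y = top → arr y z = top → arr x z = top)
    (s7 : ∀ x y : A, imp x y = top → imp y x = top → x = y)
    -- (PB-1): x→y ⪯ (y→z)↠(x→z)
    (pb1 : ∀ x y z : A, imp (imp x y) (arr (imp y z) (imp x z)) = top)
    -- (PB-2): x↠y ⪯ (y↠z)→(x↠z)
    (pb2 : ∀ x y z : A, imp (arr x y) (imp (arr y z) (arr x z)) = top)
    -- (PB-3): x ⪯ (x→y)↠y
    (pb3 : ∀ x y : A, imp x (arr (imp x y) y) = top)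
    -- (PB-4): x ⪯ (x↠y)→y
    (pb4 : ∀ x y : A, imp x (imp (arr x y) y) = top)
    -- (PB-5): x ⪯ x
    (pb5 : ∀ x : A, imp x x = top)
    -- (PB-6): antisymmetry of ⪯
    (pb6 : ∀ x y : A, imp x y = top → imp y x = top → x = y)
    -- (PB-7): x ⪯ y iff x→y = ⊤ iff x↠y = ⊤
    (pb7 : ∀ x y : A, imp x y = top ↔ arr x y = top) :
    (∀ x y : A, arr x y = imp x y) ∧
    -- (C-1)
    (∀ x y z : A, imp (imp y z) (imp (imp z x) (imp y x)) = top) ∧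
    -- (C-2)
    (∀ x y : A, imp x (imp (imp x y) y) = top) ∧
    -- (C-3)
    (∀ x : A, imp x x = top) ∧
    -- (C-4)
    (∀ x y : A, imp x y = top → imp y x = top → x = y) := by
  have key : ∀ x y : A, arr x y = imp x y := by
    intro x y
    have h1 : imp (arr x y) (imp x y) = top := by
      have := pb4 x y
      rwa [s2] at this
    have h2 : imp (imp x y) (arr x y) = top := by
      rw [pb7]
      have := (pb7 x (arr (imp x y) y)).mp (pb3 x y)
      rwa [s1] at this
    exact pb6 _ _ h1 h2
  refine ⟨key, ?_, ?_, pb5, pb6⟩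
  · intro x y z
    have := pb1 y z x
    rwa [key] at this
  · intro x y
    have := pb4 x y
    rwa [key] at this
end
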